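/- Let (R, m) be a Noetherian local ring. If R is S_2 and the normalization map R → R^ν is bijective on prime spectra and an isomorphism at all height-1 primes, then any finite birational extension R ⊂ R' inside the total ring of fractions with R' = R at all height-1 primes satisfies R' = R. -/

import Mathlib

open IsLocalRing

universe u

/-- A Noetherian local ring has depth `≥ n` if there is a regular sequence of length `n`
contained in the maximal ideal. -/
def HasDepthGE (R : Type*) [CommRing R] [IsLocalRing R] (n : ℕ) : Prop :=
  ∃ rs : List R, rs.length = n ∧ (∀ x ∈ rs, x ∈ maximalIdeal R) ∧
    RingTheory.Sequence.IsRegular R rs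

/-- A local ring satisfies Serre's condition `S_2` if its depth is at least
`min(2, dim)`. -/
def IsS2Local (R : Type*) [CommRing R] [IsLocalRing R] : Prop :=
  ∀ n : ℕ, (n : WithBot ℕ∞) ≤ min 2 (ringKrullDim R) → HasDepthGE R n

/-- A subset `S` of the total ring of fractions agrees with `R` at the prime `p`:
every element of `S` becomes an element of (the image of) `R` after multiplying by
some element outside `p`. -/
def AgreesWithBaseAt (R : Type u) [CommRing R] (p : Ideal R)
    (S : Set (FractionRing R)) : Prop :=
  ∀ x ∈ S, ∃ (r s : R), s ∉ p ∧
    algebraMap R (FractionRing R) s * x = algebraMap R (FractionRing R) r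

open Pointwise

lemma auxTwoLe {d : WithBot ℕ∞} (h : ¬ d ≤ 1) : ((2 : ℕ) : WithBot ℕ∞) ≤ d := by
  rw [not_le] at h
  induction d using WithBot.recBotCoe with
  | bot => exact absurd h (by simp)
  | coe d =>
    induction d using WithTop.recTopCoe with
    | top => exact le_top
    | coe n =>
      have h1 : (1:ℕ∞) < (n:ℕ∞) := by
        rw [← WithBot.coe_one] at h
        exact WithBot.coe_lt_coe.1 h
      have h2 : (1:ℕ) < n := by exact_mod_cast h1
      have h3 : ((2:ℕ):ℕ∞) ≤ (n:ℕ∞) := by exact_mod_cast h2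
      exact le_trans (by norm_num) (WithBot.coe_le_coe.2 h3)

lemma aux_pow_mod {A : Type*} [CommRing A] {y : A} {J : Ideal A}
    (hy : ∀ c : A, y * c ∈ J → c ∈ J) : ∀ (N : ℕ) (c : A), y ^ N * c ∈ J → c ∈ J := by
  intro N
  induction N with
  | zero => intro c hc; simpa using hc
  | succ N ih =>
    intro c hc
    exact ih c (hy _ (by rwa [show y * (y ^ N * c) = y ^ (N + 1) * c by ring]))

lemma aux_reg_pow {A : Type*} [CommRing A] {x : A} (hx : ∀ c : A, x * c = 0 → c = 0) :
    ∀ (N : ℕ) (c : A), x ^ N * c = 0 → c = 0 := by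
  intro N
  induction N with
  | zero => intro c hc; simpa using hc
  | succ N ih =>
    intro c hc
    exact ih c (hx _ (by rw [show x * (x ^ N * c) = x ^ (N + 1) * c by ring, hc]))

lemma aux_span_pow {A : Type*} [CommRing A] {x y : A}
    (hx : ∀ c : A, x * c = 0 → c = 0)
    (hy : ∀ c : A, y * c ∈ Ideal.span {x} → c ∈ Ideal.span {x}) :
    ∀ (N : ℕ) (c : A), y * c ∈ Ideal.span {x ^ N} → c ∈ Ideal.span {x ^ N} := by
  intro N
  induction N with
  | zero => intro c _; simp [Ideal.span_singleton_one]
  | succ N ih =>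
    intro c hc
    rw [Ideal.mem_span_singleton] at hc
    obtain ⟨d, hd⟩ := hc
    have h1 : c ∈ Ideal.span {x} :=
      hy c (Ideal.mem_span_singleton.2 ⟨x ^ N * d, by rw [hd, pow_succ]; ring⟩)
    obtain ⟨c₁, hc₁⟩ := Ideal.mem_span_singleton.1 h1
    have h3 : x * (y * c₁ - x ^ N * d) = 0 := by
      have h4 : y * (x * c₁) = x ^ (N + 1) * d := by rw [← hc₁, hd]
      linear_combination h4
    have h2 : y * c₁ = x ^ N * d := sub_eq_zero.1 (hx _ h3)
    obtain ⟨e, he⟩ := Ideal.mem_span_singleton.1 (ih c₁ (Ideal.mem_span_singleton.2 ⟨d, h2⟩))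
    exact Ideal.mem_span_singleton.2 ⟨e, by rw [hc₁, he, pow_succ]; ring⟩

lemma aux_dim_le_one_of_minimal {R : Type*} [CommRing R] (q : Ideal R) [q.IsPrime]
    (hq : q ∈ minimalPrimes R) : ringKrullDim (Localization.AtPrime q) ≤ 1 := by
  have hsub : Subsingleton (PrimeSpectrum (Localization.AtPrime q)) := by
    constructor
    intro P Q
    set e := IsLocalization.AtPrime.orderIsoOfPrime (Localization.AtPrime q) q with he
    have key : ∀ P : {p : Ideal (Localization.AtPrime q) // p.IsPrime}, (e P).1 = q := fun P =>
      le_antisymm (e P).2.2 (hq.2 ⟨(e P).2.1, bot_le⟩ (e P).2.2)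
    have h2 : (⟨P.asIdeal, P.isPrime⟩ : {p : Ideal (Localization.AtPrime q) // p.IsPrime}) =
        ⟨Q.asIdeal, Q.isPrime⟩ :=
      e.injective (Subtype.ext ((key _).trans (key _).symm))
    exact PrimeSpectrum.ext (congrArg Subtype.val h2)
  refine le_trans ?_ (zero_le_one : (0 : WithBot ℕ∞) ≤ 1)
  exact Order.krullDim_nonpos_of_subsingleton

lemma aux_exists_regular {R : Type*} [CommRing R] [IsNoetherianRing R] [IsReduced R]
    (I : Ideal R)
    (hI : ∀ q : Ideal R, q ∈ minimalPrimes R → ¬ I ≤ q) :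
    ∃ s ∈ I, s ∈ nonZeroDivisors R := by
  by_contra hcon
  push_neg at hcon
  have hfin := minimalPrimes.finite_of_isNoetherianRing R
  classical
  have hrad : ((⊥ : Ideal R)).radical = ⊥ := by
    rw [← Submodule.zero_eq_bot]
    exact nilradical_eq_zero R
  have hcover : (I : Set R) ⊆ ⋃ q ∈ ((hfin.toFinset : Finset (Ideal R)) : Set (Ideal R)),
      ((id q : Ideal R) : Set R) := by
    intro r hr
    have hr' := hcon r hr
    rw [mem_nonZeroDivisors_iff_right] at hr'
    push_neg at hr'
    obtain ⟨a, ha0, hane⟩ := hr'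
    have hanil : a ∉ sInf ((⊥ : Ideal R).minimalPrimes) := by
      rw [Ideal.sInf_minimalPrimes, hrad]
      simpa using hane
    rw [Ideal.mem_sInf] at hanil
    push_neg at hanil
    obtain ⟨q, hq, haq⟩ := hanil
    have hqprime : q.IsPrime := hq.1.1
    have hrq : r ∈ q := by
      rcases hqprime.mem_or_mem (show a * r ∈ q from ha0 ▸ q.zero_mem) with h | h
      · exact absurd h haq
      · exact h
    exact Set.mem_biUnion (hfin.mem_toFinset.2 hq) hrq
  obtain ⟨q, hq, hle⟩ := (Ideal.subset_union_prime (s := hfin.toFinset) (f := id) ⊥ ⊥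
    (fun i hi _ _ => (hfin.mem_toFinset.1 hi).1.1)).1 hcover
  exact hI q (hfin.mem_toFinset.1 hq) hle

/-- Let `(R, m)` be a reduced Noetherian local ring. If `R` is `S_2` and the
normalization map `R → R^ν` is bijective on prime spectra and an isomorphism at all
height-1 primes, then any finite birational extension `R ⊆ R'` inside the total ring of
fractions with `R' = R` at all height-1 primes satisfies `R' = R` (i.e. `R' = ⊥` as a
subalgebra of `Frac R`). -/
theorem finite_birational_extension_eq_of_S2
    (R : Type u) [CommRing R] [IsLocalRing R] [IsNoetherianRing R] [IsReduced R]
    (hS2 : ∀ (p : Ideal R) [p.IsPrime], IsS2Local (Localization.AtPrime p))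
    (hνbij : Function.Bijective
      (PrimeSpectrum.comap (algebraMap R (integralClosure R (FractionRing R)))))
    (hνht1 : ∀ (p : Ideal R) [p.IsPrime],
      ringKrullDim (Localization.AtPrime p) ≤ 1 →
      AgreesWithBaseAt R p (integralClosure R (FractionRing R) : Set (FractionRing R)))
    (R' : Subalgebra R (FractionRing R)) (hfin : R'.toSubmodule.FG)
    (hR'ht1 : ∀ (p : Ideal R) [p.IsPrime],
      ringKrullDim (Localization.AtPrime p) ≤ 1 →
      AgreesWithBaseAt R p (R' : Set (FractionRing R))) :
    R' = ⊥ := by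
  rw [eq_bot_iff]
  intro x₀ hx₀mem
  rw [Algebra.mem_bot]
  by_contra hx₀
  set φ := algebraMap R (FractionRing R) with hφ
  -- the colon ideal I = (R : x₀)
  set I : Ideal R :=
    { carrier := {r : R | ∃ a : R, φ r * x₀ = φ a}
      add_mem' := by
        rintro r r' ⟨a, ha⟩ ⟨a', ha'⟩
        exact ⟨a + a', by rw [map_add, map_add, add_mul, ha, ha']⟩
      zero_mem' := ⟨0, by simp⟩
      smul_mem' := by
        rintro c r ⟨a, ha⟩
        refine ⟨c * a, ?_⟩
        rw [smul_eq_mul, map_mul, map_mul, mul_assoc, ha] } with hIdef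
  have hImem : ∀ r : R, r ∈ I ↔ ∃ a : R, φ r * x₀ = φ a := fun r => Iff.rfl
  -- no prime containing I has small dimension
  have hF1 : ∀ (p : Ideal R) [p.IsPrime], I ≤ p →
      ¬ ringKrullDim (Localization.AtPrime p) ≤ 1 := by
    intro p _ hIp hdim
    obtain ⟨r, s, hs, heq⟩ := hR'ht1 p hdim x₀ hx₀mem
    exact hs (hIp ((hImem s).2 ⟨r, heq⟩))
  -- I is proper
  have hInetop : I ≠ ⊤ := by
    intro h
    obtain ⟨a, ha⟩ := (hImem 1).1 (h ▸ Submodule.mem_top)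
    exact hx₀ ⟨a, by rw [← ha, map_one, one_mul]⟩
  -- a regular element of I
  obtain ⟨s, hsI, hsreg⟩ := aux_exists_regular I (fun q hq hle => by
    have hqp : q.IsPrime := hq.1.1
    exact hF1 q hle (aux_dim_le_one_of_minimal q hq))
  obtain ⟨ρ, hρ⟩ := (hImem s).1 hsI
  -- a minimal prime over I
  obtain ⟨p, hp, -⟩ := Ideal.exists_minimalPrimes_le (le_maximalIdeal hInetop)
  have hpprime : p.IsPrime := hp.1.1
  have hIp : I ≤ p := hp.1.2
  set A := Localization.AtPrime p with hA
  haveI : IsNoetherianRing A := IsLocalization.isNoetherianRing p.primeCompl A inferInstance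
  set ψ := algebraMap R A with hψ
  -- depth ≥ 2
  have hdim : ¬ ringKrullDim A ≤ 1 := hF1 p hIp
  obtain ⟨rs, hlen, hmem, hreg⟩ := hS2 p 2 (le_min (by norm_num) (auxTwoLe hdim))
  obtain ⟨x, y, rfl⟩ := List.length_eq_two.1 hlen
  have hxm : x ∈ maximalIdeal A := hmem x (by simp)
  have hym : y ∈ maximalIdeal A := hmem y (by simp)
  have hw := hreg.toIsWeaklyRegular
  rw [RingTheory.Sequence.isWeaklyRegular_cons_iff] at hw
  obtain ⟨hx0, hw2⟩ := hw
  rw [RingTheory.Sequence.isWeaklyRegular_cons_iff] at hw2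
  obtain ⟨hy0, -⟩ := hw2
  have hx : ∀ c : A, x * c = 0 → c = 0 := fun c hc =>
    hx0 (show x • c = x • 0 by rw [smul_eq_mul, hc, smul_zero])
  have hy : ∀ c : A, y * c ∈ Ideal.span {x} → c ∈ Ideal.span {x} := by
    intro c hc
    obtain ⟨d, hd⟩ := Ideal.mem_span_singleton.1 hc
    have h1 : y • (Submodule.Quotient.mk c : QuotSMulTop x A) = y • (0 : QuotSMulTop x A) := by
      rw [smul_zero, ← Submodule.Quotient.mk_smul, Submodule.Quotient.mk_eq_zero]
      have hmem2 : x • d ∈ x • (⊤ : Submodule A A) :=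
        Submodule.smul_mem_pointwise_smul d x ⊤ Submodule.mem_top
      rwa [smul_eq_mul, ← hd] at hmem2
    have h2 := hy0 h1
    rw [Submodule.Quotient.mk_eq_zero] at h2
    rw [← SetLike.mem_coe, Submodule.coe_pointwise_smul, Set.mem_smul_set] at h2
    obtain ⟨e, -, he⟩ := h2
    exact Ideal.mem_span_singleton.2 ⟨e, by rw [← he, smul_eq_mul]⟩
  -- a power of the maximal ideal is inside I·A
  set J := I.map ψ with hJdef
  have hJm : J ≤ maximalIdeal A := by
    rw [← Localization.AtPrime.map_eq_maximalIdeal]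
    exact Ideal.map_mono hIp
  have hrad : J.radical = maximalIdeal A := by
    apply le_antisymm
    · have h1 := Ideal.radical_mono hJm
      rwa [(IsLocalRing.maximalIdeal.isMaximal A).isPrime.radical] at h1
    · rw [Ideal.radical_eq_sInf]
      refine le_sInf ?_
      rintro Q ⟨hJQ, hQp⟩
      have hle : Ideal.comap ψ Q ≤ p := by
        intro r hr
        by_contra hrp
        have hru : IsUnit (ψ r) := (IsLocalization.AtPrime.isUnit_to_map_iff A p r).2 hrp
        exact hQp.ne_top (Q.eq_top_of_isUnit_mem hr hru)
      haveI := hQp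
      haveI : (Ideal.comap ψ Q).IsPrime := Ideal.IsPrime.comap ψ
      have hge : p ≤ Ideal.comap ψ Q :=
        hp.2 ⟨inferInstance, le_trans Ideal.le_comap_map (Ideal.comap_mono hJQ)⟩ hle
      calc maximalIdeal A = p.map ψ := (Localization.AtPrime.map_eq_maximalIdeal).symm
        _ ≤ (Ideal.comap ψ Q).map ψ := Ideal.map_mono hge
        _ ≤ Q := Ideal.map_comap_le
  obtain ⟨N, hN⟩ := Ideal.exists_radical_pow_le_of_fg J (IsNoetherian.noetherian _)
  rw [hrad] at hN
  have hxNJ : x ^ N ∈ J := hN (Ideal.pow_mem_pow hxm N)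
  have hyNJ : y ^ N ∈ J := hN (Ideal.pow_mem_pow hym N)
  obtain ⟨⟨s₁, u⟩, hs₁⟩ := (IsLocalization.mem_map_algebraMap_iff p.primeCompl A).1 hxNJ
  obtain ⟨⟨t₁, v⟩, ht₁⟩ := (IsLocalization.mem_map_algebraMap_iff p.primeCompl A).1 hyNJ
  obtain ⟨τ₁, hτ₁⟩ := (hImem s₁).1 s₁.2
  obtain ⟨τ₂, hτ₂⟩ := (hImem t₁).1 t₁.2
  have hinj := IsFractionRing.injective R (FractionRing R)
  have e₁ : (s₁ : R) * ρ = s * τ₁ := hinj (by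
    rw [map_mul, map_mul, ← hρ, ← hτ₁]; ring)
  have e₂ : (t₁ : R) * ρ = s * τ₂ := hinj (by
    rw [map_mul, map_mul, ← hρ, ← hτ₂]; ring)
  have hu : IsUnit (ψ (u : R)) := IsLocalization.map_units A u
  have hv : IsUnit (ψ (v : R)) := IsLocalization.map_units A v
  set σ := ψ s with hσdef
  -- σ is regular in A
  have hσ : ∀ c : A, σ * c = 0 → c = 0 := by
    intro c hc
    obtain ⟨⟨d, w⟩, rfl⟩ := IsLocalization.mk'_surjective p.primeCompl c
    dsimp only at hc ⊢
    rw [IsLocalization.mk'_eq_zero_iff]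
    have h1 : IsLocalization.mk' A (s * d) w = 0 := by
      rw [← IsLocalization.mul_mk'_eq_mk'_of_mul]; exact hc
    rw [IsLocalization.mk'_eq_zero_iff] at h1
    obtain ⟨m, hm⟩ := h1
    refine ⟨m, ?_⟩
    exact mem_nonZeroDivisors_iff_right.1 hsreg (↑m * d) (by linear_combination hm)
  have eq1 : x ^ N * (ψ (u : R) * ψ ρ) = σ * ψ τ₁ := by
    have h1 := congrArg ψ e₁
    rw [map_mul, map_mul, ← hs₁] at h1
    rw [← h1]; ring
  have eq2 : y ^ N * (ψ (v : R) * ψ ρ) = σ * ψ τ₂ := by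
    have h1 := congrArg ψ e₂
    rw [map_mul, map_mul, ← ht₁] at h1
    rw [← h1]; ring
  have hbb : x ^ N * ψ ρ = σ * ((↑hu.unit⁻¹ : A) * ψ τ₁) := by
    have h1 : (↑hu.unit⁻¹ : A) * ψ (u : R) = 1 := hu.val_inv_mul
    calc x ^ N * ψ ρ = ((↑hu.unit⁻¹ : A) * ψ (u : R)) * (x ^ N * ψ ρ) := by rw [h1, one_mul]
      _ = (↑hu.unit⁻¹ : A) * (x ^ N * (ψ (u : R) * ψ ρ)) := by ring
      _ = (↑hu.unit⁻¹ : A) * (σ * ψ τ₁) := by rw [eq1]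
      _ = σ * ((↑hu.unit⁻¹ : A) * ψ τ₁) := by ring
  have hcc : y ^ N * ψ ρ = σ * ((↑hv.unit⁻¹ : A) * ψ τ₂) := by
    have h1 : (↑hv.unit⁻¹ : A) * ψ (v : R) = 1 := hv.val_inv_mul
    calc y ^ N * ψ ρ = ((↑hv.unit⁻¹ : A) * ψ (v : R)) * (y ^ N * ψ ρ) := by rw [h1, one_mul]
      _ = (↑hv.unit⁻¹ : A) * (y ^ N * (ψ (v : R) * ψ ρ)) := by ring
      _ = (↑hv.unit⁻¹ : A) * (σ * ψ τ₂) := by rw [eq2]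
      _ = σ * ((↑hv.unit⁻¹ : A) * ψ τ₂) := by ring
  set b := (↑hu.unit⁻¹ : A) * ψ τ₁ with hbdef
  set c := (↑hv.unit⁻¹ : A) * ψ τ₂ with hcdef
  -- the regular sequence computation
  have hxyc : x ^ N * c = y ^ N * b := by
    have h1 : σ * (x ^ N * c - y ^ N * b) = 0 := by
      have h2 : x ^ N * (y ^ N * ψ ρ) = y ^ N * (x ^ N * ψ ρ) := by ring
      rw [hbb, hcc] at h2
      linear_combination h2
    exact sub_eq_zero.1 (hσ _ h1)
  have hbspan : b ∈ Ideal.span {x ^ N} :=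
    aux_pow_mod (aux_span_pow hx hy N) N b (Ideal.mem_span_singleton.2 ⟨c, hxyc.symm⟩)
  obtain ⟨d, hd⟩ := Ideal.mem_span_singleton.1 hbspan
  have hρσ : ψ ρ = σ * d := by
    have h1 : x ^ N * (ψ ρ - σ * d) = 0 := by
      have h2 : x ^ N * ψ ρ = x ^ N * (σ * d) := by rw [hbb, hd]; ring
      linear_combination h2
    exact sub_eq_zero.1 (aux_reg_pow hx N _ h1)
  obtain ⟨⟨e, w⟩, hw⟩ := IsLocalization.surj p.primeCompl d
  have hψeq : ψ (ρ * (w : R)) = ψ (s * e) := by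
    rw [map_mul, map_mul, hρσ, mul_assoc]
    simp only at hw
    rw [hw]
  obtain ⟨m, hm⟩ := (IsLocalization.eq_iff_exists p.primeCompl A).1 hψeq
  -- conclude: m * w ∈ I but m * w ∉ p
  have hfinal : ((m : R) * (w : R)) ∈ I := by
    rw [hImem]
    refine ⟨(m : R) * e, ?_⟩
    have hsunit : IsUnit (φ s) := IsLocalization.map_units (FractionRing R) ⟨s, hsreg⟩
    apply hsunit.mul_left_cancel
    calc φ s * (φ ((m : R) * (w : R)) * x₀)
        = φ ((m : R) * (w : R)) * (φ s * x₀) := by ring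
      _ = φ ((m : R) * (w : R)) * φ ρ := by rw [hρ]
      _ = φ ((m : R) * (ρ * (w : R))) := by rw [← map_mul]; ring_nf
      _ = φ ((m : R) * (s * e)) := by rw [hm]
      _ = φ s * φ ((m : R) * e) := by rw [← map_mul]; ring_nf
  exact (p.primeCompl.mul_mem m.2 w.2) (hIp hfinal)
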